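/- Under the hypotheses of the abstract substructuring identity (B ∘ ℛ = R ∘ ℬ with 𝒜 = ℛᵀ L ℛ, ℬ, B surjective, ℛ, R injective, and B(w) ∈ range(R) ⇒ w ∈ range(ℛ)), the pseudo-inverses satisfy the commutation relation ℛ ∘ ℬ†_𝒜 = B†_L ∘ R, where ℬ†_𝒜 is the pseudo-inverse of ℬ relative to the 𝒜-norm on V and B†_L is the pseudo-inverse of B relative to the L-norm on 𝕍. -/

import Mathlib

/-- Under the hypotheses of the abstract substructuring identity
(`B ∘ ℛ = R ∘ ℬ`, `𝒜 = ℛᵀ L ℛ`, `ℬ, B` surjective, `ℛ, R` injective, and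
`B w ∈ range R → w ∈ range ℛ`), the pseudo-inverses satisfy
`ℛ ∘ ℬ†_𝒜 = B†_L ∘ R`, where `ℬ†_𝒜` is the pseudo-inverse of `ℬ` relative to the
`𝒜`-norm and `B†_L` the pseudo-inverse of `B` relative to the `L`-norm. -/
theorem stmt10
    {V 𝕍 S 𝕊 : Type*}
    [NormedAddCommGroup V] [InnerProductSpace ℝ V] [FiniteDimensional ℝ V]
    [NormedAddCommGroup 𝕍] [InnerProductSpace ℝ 𝕍] [FiniteDimensional ℝ 𝕍]
    [NormedAddCommGroup S] [InnerProductSpace ℝ S] [FiniteDimensional ℝ S]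
    [NormedAddCommGroup 𝕊] [InnerProductSpace ℝ 𝕊] [FiniteDimensional ℝ 𝕊]
    (𝒜 : V →ₗ[ℝ] V) (L : 𝕍 →ₗ[ℝ] 𝕍)
    (h𝒜sa : LinearMap.adjoint 𝒜 = 𝒜)
    (h𝒜pos : ∀ u : V, u ≠ 0 → (0 : ℝ) < inner ℝ (𝒜 u) u)
    (hLsa : LinearMap.adjoint L = L)
    (hLpos : ∀ u : 𝕍, u ≠ 0 → (0 : ℝ) < inner ℝ (L u) u)
    (ℛ : V →ₗ[ℝ] 𝕍) (hℛ : Function.Injective ℛ)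
    (h𝒜 : 𝒜 = LinearMap.adjoint ℛ ∘ₗ L ∘ₗ ℛ)
    (ℬ : V →ₗ[ℝ] S) (hℬ : Function.Surjective ℬ)
    (B : 𝕍 →ₗ[ℝ] 𝕊) (hB : Function.Surjective B)
    (R : S →ₗ[ℝ] 𝕊) (hR : Function.Injective R)
    (hComm : B ∘ₗ ℛ = R ∘ₗ ℬ)
    (hConf : ∀ w : 𝕍, B w ∈ LinearMap.range R → w ∈ LinearMap.range ℛ)
    (ℬd : S →ₗ[ℝ] V)
    (hℬd1 : ∀ s : S, ℬ (ℬd s) = s)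
    (hℬd2 : ∀ (s : S) (v : V), ℬ v = s →
      (inner ℝ (𝒜 (ℬd s)) (ℬd s) : ℝ) ≤ inner ℝ (𝒜 v) v)
    (Bd : 𝕊 →ₗ[ℝ] 𝕍)
    (hBd1 : ∀ t : 𝕊, B (Bd t) = t)
    (hBd2 : ∀ (t : 𝕊) (w : 𝕍), B w = t →
      (inner ℝ (L (Bd t)) (Bd t) : ℝ) ≤ inner ℝ (L w) w) :
    ℛ ∘ₗ ℬd = Bd ∘ₗ R := by
  ext s
  simp only [LinearMap.comp_apply]
  set u := ℬd s with hu
  set w := ℛ u with hw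
  set m := Bd (R s) with hm
  -- key quadratic form identity
  have hAL : ∀ x : V, (inner ℝ (𝒜 x) x : ℝ) = inner ℝ (L (ℛ x)) (ℛ x) := by
    intro x
    rw [h𝒜]
    simp only [LinearMap.comp_apply]
    rw [LinearMap.adjoint_inner_left]
  have hBw : B w = R s := by
    have := congrArg (fun f => f u) hComm
    simp only [LinearMap.comp_apply] at this
    rw [hw, this, hu, hℬd1]
  have h1 : (inner ℝ (L m) m : ℝ) ≤ inner ℝ (L w) w := hBd2 (R s) w hBw
  -- m is in range ℛ
  have hmr : m ∈ LinearMap.range ℛ := hConf m (by rw [hm, hBd1]; exact ⟨s, rfl⟩)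
  obtain ⟨v, hv⟩ := hmr
  have hℬv : ℬ v = s := by
    apply hR
    have := congrArg (fun f => f v) hComm
    simp only [LinearMap.comp_apply] at this
    rw [← this, hv, hm, hBd1]
  have h2 : (inner ℝ (L w) w : ℝ) ≤ inner ℝ (L m) m := by
    rw [← hv, hw, ← hAL, ← hAL]
    exact hℬd2 s v hℬv
  have heq : (inner ℝ (L m) m : ℝ) = inner ℝ (L w) w := le_antisymm h1 h2
  -- symmetry of the L form
  have hsym : ∀ a b : 𝕍, (inner ℝ (L a) b : ℝ) = inner ℝ (L b) a := by
    intro a b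
    rw [← hLsa, LinearMap.adjoint_inner_left, real_inner_comm, hLsa]
  -- midpoint argument
  have hzfeas : B ((2:ℝ)⁻¹ • (m + w)) = R s := by
    rw [map_smul, map_add, hBw, hm, hBd1, ← two_smul ℝ, smul_smul]
    norm_num
  have h3 : (inner ℝ (L m) m : ℝ) ≤ inner ℝ (L ((2:ℝ)⁻¹ • (m + w))) ((2:ℝ)⁻¹ • (m + w)) :=
    hBd2 (R s) _ hzfeas
  have hexpand : (inner ℝ (L ((2:ℝ)⁻¹ • (m + w))) ((2:ℝ)⁻¹ • (m + w)) : ℝ)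
      = (4:ℝ)⁻¹ * (inner ℝ (L m) m + inner ℝ (L m) w + inner ℝ (L w) m + inner ℝ (L w) w) := by
    simp only [map_smul, map_add, inner_smul_left, inner_smul_right, inner_add_left,
      inner_add_right, RCLike.conj_to_real]
    ring
  have hc : (inner ℝ (L m) m : ℝ) ≤ inner ℝ (L m) w := by
    rw [hexpand] at h3
    have hcs : (inner ℝ (L w) m : ℝ) = inner ℝ (L m) w := hsym w m
    rw [hcs, ← heq] at h3
    linarith
  have hdz : m - w = 0 := by
    by_contra hne
    have hpos := hLpos (m - w) hne
    have : (inner ℝ (L (m - w)) (m - w) : ℝ)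
        = inner ℝ (L m) m - inner ℝ (L m) w - inner ℝ (L w) m + inner ℝ (L w) w := by
      simp only [map_sub, inner_sub_left, inner_sub_right]
      ring
    rw [hsym w m, ← heq] at this
    linarith
  have : m = w := by rwa [sub_eq_zero] at hdz
  rw [this]
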